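/- arXiv:1910.10944 — 3 statements merged into one kernel-verified Lean document; each statement's English description precedes it below -/
import Mathlib

section
/- For every finite instance set X, finite hypothesis class H of functions X → Bool, and initial hypothesis h0 ∈ H, every collusion-free preference function σ of the form σ(h'; H', h) = g(h', H') satisfies TD_{X,H,h0}(σ) ≥ NCTD(H); consequently Σ_gvs-TD_{X,H,h0} ≥ NCTD(H). -/
open scoped Classical

/-- A preference function `σ(h'; H', h)`: `h'` is a candidate hypothesis, `H'` the current
version space, `h` the learner's current hypothesis. -/
abbrev Pref (X : Type) : Type := (X → Bool) → Finset (X → Bool) → (X → Bool) → ℝ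

variable {X : Type}

/-- `h` is consistent with the labeled examples in `S`. -/
def ConsistentWith (h : X → Bool) (S : Finset (X × Bool)) : Prop := ∀ z ∈ S, h z.1 = z.2

/-- Version space of `H'` induced by the labeled examples `S`. -/
noncomputable def verSpace (H' : Finset (X → Bool)) (S : Finset (X × Bool)) :
    Finset (X → Bool) :=
  H'.filter fun h => ∀ z ∈ S, h z.1 = z.2

/-- The set of hypotheses in `H'` most preferred by `σ` given current hypothesis `h`. -/
noncomputable def argminSet (σ : Pref X) (H' : Finset (X → Bool)) (h : X → Bool) :
    Finset (X → Bool) :=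
  H'.filter fun h' => ∀ h'' ∈ H', σ h' H' h ≤ σ h'' H' h

/-- `C_σ(H', h, z)`: the candidate hypotheses most preferred by the learner after
receiving the labeled example `z`. -/
noncomputable def Cand (σ : Pref X) (H' : Finset (X → Bool)) (h : X → Bool) (z : X × Bool) :
    Finset (X → Bool) :=
  argminSet σ (verSpace H' {z}) h

/-- `Dle σ n H' h h*` means the worst-case teaching cost `D_σ(H', h, h*) ≤ n`. -/
def Dle (σ : Pref X) : ℕ → Finset (X → Bool) → (X → Bool) → (X → Bool) → Prop
  | 0, _, _, _ => False
  | n + 1, H', h, hstar =>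
      (∃ z : X × Bool, hstar z.1 = z.2 ∧ Cand σ H' h z = {hstar}) ∨
      (∃ z : X × Bool, hstar z.1 = z.2 ∧
        ∀ h'' ∈ Cand σ H' h z, Dle σ n (verSpace H' {z}) h'' hstar)

/-- The worst-case teaching cost `D_σ(H', h, h*)` (∞ when teaching is impossible). -/
noncomputable def Dval (σ : Pref X) (H' : Finset (X → Bool)) (h hstar : X → Bool) : ℕ∞ :=
  sInf {n : ℕ∞ | ∃ m : ℕ, n = (m : ℕ∞) ∧ Dle σ m H' h hstar}

/-- Teaching dimension `TD_{X,H,h0}(σ) = max_{h* ∈ H} D_σ(H, h0, h*)`. -/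
noncomputable def TDpref (Hc : Finset (X → Bool)) (h0 : X → Bool) (σ : Pref X) : ℕ∞ :=
  ⨆ hstar ∈ Hc, Dval σ Hc h0 hstar

/-- Teaching dimension of a family of preference functions: `Σ-TD = min_{σ ∈ Σ} TD(σ)`. -/
noncomputable def famTD (Hc : Finset (X → Bool)) (h0 : X → Bool) (F : Set (Pref X)) : ℕ∞ :=
  ⨅ σ ∈ F, TDpref Hc h0 σ

/-- A preference function is collusion-free. -/
def CollusionFree (Hc : Finset (X → Bool)) (σ : Pref X) : Prop :=
  ∀ h ∈ Hc, ∀ H' ⊆ Hc, ∀ hhat : X → Bool,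
    argminSet σ H' h = {hhat} →
    ∀ S : Finset (X × Bool), ConsistentWith hhat S →
      argminSet σ (verSpace H' S) hhat = {hhat}

/-- `Σ_const`: collusion-free constant preference functions. -/
def SigmaConst (Hc : Finset (X → Bool)) : Set (Pref X) :=
  {σ | CollusionFree Hc σ ∧ ∃ c : ℝ, ∀ h' H' h, σ h' H' h = c}

/-- `Σ_global`: collusion-free preference functions of the form `g(h')`. -/
def SigmaGlobal (Hc : Finset (X → Bool)) : Set (Pref X) :=
  {σ | CollusionFree Hc σ ∧ ∃ g : (X → Bool) → ℝ, ∀ h' H' h, σ h' H' h = g h'}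

/-- `Σ_gvs`: collusion-free preference functions of the form `g(h', H')`. -/
def SigmaGVS (Hc : Finset (X → Bool)) : Set (Pref X) :=
  {σ | CollusionFree Hc σ ∧
    ∃ g : (X → Bool) → Finset (X → Bool) → ℝ, ∀ h' H' h, σ h' H' h = g h' H'}

/-- `Σ_local`: collusion-free preference functions of the form `g(h', h)`. -/
def SigmaLocal (Hc : Finset (X → Bool)) : Set (Pref X) :=
  {σ | CollusionFree Hc σ ∧ ∃ g : (X → Bool) → (X → Bool) → ℝ, ∀ h' H' h, σ h' H' h = g h' h}

/-- `Σ_lvs`: all collusion-free preference functions. -/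
def SigmaLVS (Hc : Finset (X → Bool)) : Set (Pref X) := {σ | CollusionFree Hc σ}

/-- `T` is a teaching set for `h` w.r.t. the subclass `Hc`. -/
def IsTeachingSet (Hc : Finset (X → Bool)) (h : X → Bool) (T : Finset X) : Prop :=
  ∀ h' ∈ Hc, (∀ x ∈ T, h' x = h x) → h' = h

/-- Size of the minimum teaching set of `h` w.r.t. `Hc`. -/
noncomputable def minTSsize (Hc : Finset (X → Bool)) (h : X → Bool) : ℕ :=
  sInf {k | ∃ T : Finset X, T.card = k ∧ IsTeachingSet Hc h T}

/-- The classical (worst-case) teaching dimension `TD(H)`. -/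
noncomputable def TDclassic (Hc : Finset (X → Bool)) : ℕ :=
  Hc.sup (minTSsize Hc)

/-- Witness for `RTD(H) ≤ k`: an ordering of `H` where each hypothesis has a teaching
set of size at most `k` w.r.t. the remaining hypotheses. -/
def RTDwitness (Hc : Finset (X → Bool)) (k : ℕ) : Prop :=
  ∃ L : List (X → Bool), L.Nodup ∧ L.toFinset = Hc ∧
    ∀ (i : ℕ) (hi : i < L.length), ∃ T : Finset X, T.card ≤ k ∧
      IsTeachingSet (L.drop i).toFinset (L.get ⟨i, hi⟩) T

/-- The recursive teaching dimension `RTD(H)`. -/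
noncomputable def RTD (Hc : Finset (X → Bool)) : ℕ := sInf {k | RTDwitness Hc k}

/-- A teacher mapping is non-clashing on `Hc`. -/
def NonClashing (Hc : Finset (X → Bool)) (T : (X → Bool) → Finset X) : Prop :=
  ∀ h ∈ Hc, ∀ h' ∈ Hc, h ≠ h' →
    ¬ ((∀ x ∈ T h, h' x = h x) ∧ (∀ x ∈ T h', h x = h' x))

/-- The non-clashing teaching dimension `NCTD(H)`. -/
noncomputable def NCTD (Hc : Finset (X → Bool)) : ℕ :=
  sInf {k | ∃ T : (X → Bool) → Finset X, NonClashing Hc T ∧ ∀ h ∈ Hc, (T h).card ≤ k}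

/-- `Hc` shatters the set of instances `X'`. -/
def Shatters (Hc : Finset (X → Bool)) (X' : Finset X) : Prop :=
  ∀ b : X → Bool, ∃ h ∈ Hc, ∀ x ∈ X', h x = b x

/-- The VC dimension `VCD(H, X)`. -/
noncomputable def VCD (Hc : Finset (X → Bool)) : ℕ :=
  sSup {k | ∃ X' : Finset X, X'.card = k ∧ Shatters Hc X'}
/-! ### Auxiliary lemmas -/

lemma verSpace_verSpace (H' : Finset (X → Bool)) (A B : Finset (X × Bool)) :
    verSpace (verSpace H' A) B = verSpace H' (A ∪ B) := by
  ext f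
  simp only [verSpace, Finset.mem_filter, Finset.mem_union, and_assoc]
  constructor
  · rintro ⟨h1, h2, h3⟩
    exact ⟨h1, fun z hz => hz.elim (h2 z) (h3 z)⟩
  · rintro ⟨h1, h2⟩
    exact ⟨h1, fun z hz => h2 z (Or.inl hz), fun z hz => h2 z (Or.inr hz)⟩

lemma argminSet_param (σ : Pref X) (g : (X → Bool) → Finset (X → Bool) → ℝ)
    (hg : ∀ h' H' h, σ h' H' h = g h' H') (V : Finset (X → Bool)) (a b : X → Bool) :
    argminSet σ V a = argminSet σ V b := by
  simp only [argminSet, hg]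

lemma argminSet_nonempty (σ : Pref X) (V : Finset (X → Bool)) (h : X → Bool)
    (hV : V.Nonempty) : (argminSet σ V h).Nonempty := by
  obtain ⟨a, ha, hmin⟩ := V.exists_min_image (fun h' => σ h' V h) hV
  exact ⟨a, Finset.mem_filter.mpr ⟨ha, hmin⟩⟩

lemma exists_teachset (σ : Pref X) (g : (X → Bool) → Finset (X → Bool) → ℝ)
    (hg : ∀ h' H' h, σ h' H' h = g h' H') :
    ∀ (m : ℕ) (H' : Finset (X → Bool)) (h hstar : X → Bool), hstar ∈ H' →
      Dle σ m H' h hstar →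
      ∃ S : Finset (X × Bool), S.card ≤ m ∧ ConsistentWith hstar S ∧
        argminSet σ (verSpace H' S) h = {hstar} := by
  intro m
  induction m with
  | zero => intro H' h hstar _ hD; exact absurd hD (by simp [Dle])
  | succ m ih =>
      intro H' h hstar hmem hD
      rcases hD with ⟨z, hz, hC⟩ | ⟨z, hz, hall⟩
      · refine ⟨{z}, by simp, ?_, hC⟩
        intro w hw; simp only [Finset.mem_singleton] at hw; subst hw; exact hz
      · have hmemV : hstar ∈ verSpace H' {z} := by
          refine Finset.mem_filter.mpr ⟨hmem, ?_⟩
          intro w hw; simp only [Finset.mem_singleton] at hw; subst hw; exact hz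
        obtain ⟨h'', hh''⟩ := argminSet_nonempty σ (verSpace H' {z}) h ⟨hstar, hmemV⟩
        obtain ⟨S', hcard, hcons, harg⟩ :=
          ih (verSpace H' {z}) h'' hstar hmemV (hall h'' hh'')
        refine ⟨insert z S', ?_, ?_, ?_⟩
        · calc (insert z S').card ≤ S'.card + 1 := Finset.card_insert_le _ _
            _ ≤ m + 1 := by omega
        · intro w hw
          rcases Finset.mem_insert.mp hw with hw | hw
          · subst hw; exact hz
          · exact hcons w hw
        · have : verSpace H' (insert z S') = verSpace (verSpace H' {z}) S' := by
            rw [verSpace_verSpace, ← Finset.insert_eq]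
          rw [this, argminSet_param σ g hg _ h h'', harg]

lemma nctd_le_of_teachsets (σ : Pref X) (Hc : Finset (X → Bool)) (h0 : X → Bool)
    (h0mem : h0 ∈ Hc) (hcf : CollusionFree Hc σ)
    (g : (X → Bool) → Finset (X → Bool) → ℝ)
    (hg : ∀ h' H' h, σ h' H' h = g h' H') (n : ℕ)
    (H : ∀ hstar ∈ Hc, ∃ S : Finset (X × Bool), S.card ≤ n ∧ ConsistentWith hstar S ∧
        argminSet σ (verSpace Hc S) h0 = {hstar}) :
    NCTD Hc ≤ n := by
  classical
  set T : (X → Bool) → Finset X := fun h =>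
    if hh : h ∈ Hc then ((H h hh).choose.image Prod.fst) else ∅ with hT
  have key : ∀ h ∈ Hc, ∀ h' ∈ Hc, h ≠ h' →
      ¬ ((∀ x ∈ T h, h' x = h x) ∧ (∀ x ∈ T h', h x = h' x)) := by
    intro h hmem h' hmem' hne ⟨c1, c2⟩
    obtain ⟨Scard, Scons, Sarg⟩ := (H h hmem).choose_spec
    obtain ⟨Scard', Scons', Sarg'⟩ := (H h' hmem').choose_spec
    set S := (H h hmem).choose
    set S' := (H h' hmem').choose
    have hTh : T h = S.image Prod.fst := by simp [hT, hmem]; rfl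
    have hTh' : T h' = S'.image Prod.fst := by simp [hT, hmem']; rfl
    -- S' is consistent with h, S is consistent with h'
    have hconsS' : ConsistentWith h S' := by
      intro w hw
      have : h w.1 = h' w.1 := by
        apply c2; rw [hTh']; exact Finset.mem_image_of_mem Prod.fst hw
      rw [this]; exact Scons' w hw
    have hconsS : ConsistentWith h' S := by
      intro w hw
      have : h' w.1 = h w.1 := by
        apply c1; rw [hTh]; exact Finset.mem_image_of_mem Prod.fst hw
      rw [this]; exact Scons w hw
    have e1 : argminSet σ (verSpace (verSpace Hc S) S') h = {h} :=
      hcf h0 h0mem (verSpace Hc S) (Finset.filter_subset _ _) h Sarg S' hconsS'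
    have e2 : argminSet σ (verSpace (verSpace Hc S') S) h' = {h'} :=
      hcf h0 h0mem (verSpace Hc S') (Finset.filter_subset _ _) h' Sarg' S hconsS
    rw [verSpace_verSpace] at e1 e2
    rw [Finset.union_comm S' S] at e2
    rw [argminSet_param σ g hg _ h h'] at e1
    rw [e1] at e2
    exact hne (Finset.singleton_injective e2)
  have hmem : n ∈ {k | ∃ T : (X → Bool) → Finset X, NonClashing Hc T ∧
      ∀ h ∈ Hc, (T h).card ≤ k} := by
    refine ⟨T, key, ?_⟩
    intro h hmem
    obtain ⟨Scard, _, _⟩ := (H h hmem).choose_spec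
    have : T h = (H h hmem).choose.image Prod.fst := by simp [hT, hmem]
    rw [this]
    exact le_trans (Finset.card_image_le) Scard
  exact Nat.sInf_le hmem

lemma exists_dle_of_dval_le (σ : Pref X) (Hc : Finset (X → Bool)) (h0 hstar : X → Bool)
    (n : ℕ) (hle : Dval σ Hc h0 hstar ≤ (n : ℕ∞)) :
    ∃ m : ℕ, m ≤ n ∧ Dle σ m Hc h0 hstar := by
  classical
  set A : Set ℕ := {m | Dle σ m Hc h0 hstar} with hA
  have hAne : A.Nonempty := by
    by_contra hA0
    have hempty : {k : ℕ∞ | ∃ m : ℕ, k = (m : ℕ∞) ∧ Dle σ m Hc h0 hstar} = ∅ := by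
      ext k; simp only [Set.mem_setOf_eq, Set.mem_empty_iff_false, iff_false]
      rintro ⟨m, _, hm⟩
      exact hA0 ⟨m, hm⟩
    have : Dval σ Hc h0 hstar = ⊤ := by rw [Dval, hempty, sInf_empty]
    rw [this] at hle
    exact ENat.coe_ne_top n (top_le_iff.mp hle)
  refine ⟨sInf A, ?_, Nat.sInf_mem hAne⟩
  have hlb : ((sInf A : ℕ) : ℕ∞) ≤ Dval σ Hc h0 hstar := by
    refine le_sInf ?_
    rintro k ⟨m, rfl, hm⟩
    exact_mod_cast Nat.sInf_le hm
  exact_mod_cast le_trans hlb hle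

/-- every `σ ∈ Σ_gvs` satisfies `TD(σ) ≥ NCTD(H)`; consequently
`Σ_gvs-TD ≥ NCTD(H)`. -/
theorem sigmaGVS_TD_ge_NCTD (X : Type) [Fintype X] (Hc : Finset (X → Bool))
    (h0 : X → Bool) (h0mem : h0 ∈ Hc) :
    (∀ σ ∈ SigmaGVS Hc, (NCTD Hc : ℕ∞) ≤ TDpref Hc h0 σ) ∧
    (NCTD Hc : ℕ∞) ≤ famTD Hc h0 (SigmaGVS Hc) := by
  have main : ∀ σ ∈ SigmaGVS Hc, (NCTD Hc : ℕ∞) ≤ TDpref Hc h0 σ := by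
    intro σ hσ
    obtain ⟨hcf, g, hg⟩ := hσ
    by_cases htop : TDpref Hc h0 σ = ⊤
    · rw [htop]; exact le_top
    · lift TDpref Hc h0 σ to ℕ using htop with n hn
      have hdval : ∀ hstar ∈ Hc, Dval σ Hc h0 hstar ≤ (n : ℕ∞) := by
        intro hstar hmem
        rw [hn]
        exact le_biSup (fun hstar => Dval σ Hc h0 hstar) hmem
      have hteach : ∀ hstar ∈ Hc, ∃ S : Finset (X × Bool), S.card ≤ n ∧
          ConsistentWith hstar S ∧ argminSet σ (verSpace Hc S) h0 = {hstar} := by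
        intro hstar hmem
        obtain ⟨m, hmn, hD⟩ := exists_dle_of_dval_le σ Hc h0 hstar n (hdval hstar hmem)
        obtain ⟨S, hS1, hS2, hS3⟩ := exists_teachset σ g hg m Hc h0 hstar hmem hD
        exact ⟨S, le_trans hS1 hmn, hS2, hS3⟩
      exact_mod_cast nctd_le_of_teachsets σ Hc h0 h0mem hcf g hg n hteach
  exact ⟨main, le_iInf₂ main⟩
end

section
/- For the Warmuth hypothesis class CW (over the 5-element instance set X = {x1,…,x5}, consisting of the 10 hypotheses given by all five cyclic shifts of the label vector (1,1,0,0,0) and all five cyclic shifts of (1,0,1,0,0)), there exist an initial hypothesis h0 ∈ CW and a collusion-free preference function σ_lvs such that TD_{X,CW,h0}(σ_lvs) = 1; in particular, Σ_lvs-TD for the Warmuth class equals 1, which is strictly smaller than NCTD(CW) = 2. -/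
open scoped Classical

variable {X : Type}

/-- The label vector `(1,1,0,0,0)`. -/
def wBase1 : Fin 5 → Bool := fun x => decide (x.val = 0 ∨ x.val = 1)

/-- The label vector `(1,0,1,0,0)`. -/
def wBase2 : Fin 5 → Bool := fun x => decide (x.val = 0 ∨ x.val = 2)

/-- The Warmuth hypothesis class: all five cyclic shifts of `(1,1,0,0,0)` and all five
cyclic shifts of `(1,0,1,0,0)`. -/
noncomputable def warmuthClass : Finset (Fin 5 → Bool) :=
  (Finset.univ.image fun s : Fin 5 => fun x : Fin 5 => wBase1 (x - s)) ∪
  (Finset.univ.image fun s : Fin 5 => fun x : Fin 5 => wBase2 (x - s))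

/-- explicit list of the 10 hypotheses -/
def wlist : List (Fin 5 → Bool) :=
  [fun x => decide (x.val = 0 ∨ x.val = 1),
   fun x => decide (x.val = 1 ∨ x.val = 2),
   fun x => decide (x.val = 2 ∨ x.val = 3),
   fun x => decide (x.val = 3 ∨ x.val = 4),
   fun x => decide (x.val = 4 ∨ x.val = 0),
   fun x => decide (x.val = 0 ∨ x.val = 2),
   fun x => decide (x.val = 1 ∨ x.val = 3),
   fun x => decide (x.val = 2 ∨ x.val = 4),
   fun x => decide (x.val = 3 ∨ x.val = 0),
   fun x => decide (x.val = 4 ∨ x.val = 1)]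

lemma wlist_class : ∀ h ∈ wlist, h ∈ warmuthClass := by decide
lemma wlist_ne : wlist.Pairwise (· ≠ ·) := by decide
lemma class_wlist : ∀ h ∈ warmuthClass, h ∈ wlist := by decide

abbrev PairT := (Fin 5 → Bool) × Option (Fin 5)

def consB (h g : Fin 5 → Bool) : Option (Fin 5) → Bool
  | none => true
  | some x => h x == g x

def clashB (p q : PairT) : Bool := consB q.1 p.1 p.2 && consB p.1 q.1 q.2

def optsL : List (Option (Fin 5)) := none :: ((List.finRange 5).map some)

lemma optsL_complete : ∀ o : Option (Fin 5), o ∈ optsL := by decide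

def compatB (p : PairT) (acc : List PairT) : Bool := acc.all fun q => !clashB p q

def searchB : List (Fin 5 → Bool) → List PairT → Bool
  | [], _ => false
  | h :: rest, acc =>
      optsL.all fun o => !compatB (h, o) acc || searchB rest ((h, o) :: acc)

lemma searchB_true : searchB wlist [] = true := by decide

lemma clashB_symm (p q : PairT) : clashB p q = clashB q p := by
  simp [clashB, Bool.and_comm]

lemma searchB_sound (f : (Fin 5 → Bool) → Option (Fin 5)) :
    ∀ (l : List (Fin 5 → Bool)) (acc : List PairT),
    (l.map (fun h => (h, f h)) ++ acc).Pairwise (fun p q => clashB p q = false) →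
    searchB l acc = false := by
  intro l
  induction l with
  | nil => intro acc _; rfl
  | cons h rest ih =>
    intro acc hpw
    simp only [List.map_cons, List.cons_append, List.pairwise_cons] at hpw
    obtain ⟨hhead, htail⟩ := hpw
    have hcompat : compatB (h, f h) acc = true := by
      simp only [compatB, List.all_eq_true]
      intro q hq
      simp [hhead q (by simp [hq])]
    have hsearch : searchB rest ((h, f h) :: acc) = false := by
      apply ih
      have hperm : (rest.map (fun h => (h, f h)) ++ acc).Perm
          ((rest.map (fun h => (h, f h)) ++ acc)) := List.Perm.refl _
      -- need pairwise on rest.map f ++ (h,fh)::acc from (h,fh)::(rest.map f ++ acc)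
      have h1 : ((h, f h) :: (rest.map (fun h => (h, f h)) ++ acc)).Pairwise
          (fun p q => clashB p q = false) := List.pairwise_cons.2 ⟨hhead, htail⟩
      have h2 : (rest.map (fun h => (h, f h)) ++ (h, f h) :: acc).Perm
          ((h, f h) :: (rest.map (fun h => (h, f h)) ++ acc)) := List.perm_middle
      exact h2.symm.pairwise h1 (fun {a b} hab => by rw [clashB_symm]; exact hab)
    by_contra hne
    have : searchB (h :: rest) acc = true := by
      cases hh : searchB (h :: rest) acc
      · exact absurd hh hne
      · rfl
    simp only [searchB, List.all_eq_true] at this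
    have := this (f h) (optsL_complete (f h))
    rw [hcompat, hsearch] at this
    simp at this

-- σ construction part
def wl (i : ℕ) : Fin 5 → Bool := wlist.getD i (fun _ => false)

noncomputable def zfun (h : Fin 5 → Bool) : Fin 5 × Bool :=
  if h = wl 0 then (0, true) else if h = wl 1 then (0, false)
  else if h = wl 2 then (1, false) else if h = wl 3 then (2, false)
  else if h = wl 4 then (3, false) else if h = wl 5 then (2, true)
  else if h = wl 6 then (3, true) else if h = wl 7 then (4, true)
  else if h = wl 8 then (4, false) else (1, true)

noncomputable def Vz (g : Fin 5 → Bool) : Finset (Fin 5 → Bool) :=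
  verSpace warmuthClass {zfun g}

noncomputable def VzC (g : Fin 5 → Bool) : Finset (Fin 5 → Bool) :=
  warmuthClass.filter (fun h => h (zfun g).1 = (zfun g).2)

lemma Vz_eq_VzC (g : Fin 5 → Bool) : Vz g = VzC g := by
  ext h
  simp [Vz, VzC, verSpace, Finset.mem_filter]

lemma fact_consis : ∀ g ∈ warmuthClass, g (zfun g).1 = (zfun g).2 := by decide

lemma fact_inj : ∀ g ∈ warmuthClass, ∀ g' ∈ warmuthClass, VzC g = VzC g' → g = g' := by decide

lemma fact_nosub : ∀ g ∈ warmuthClass, g ≠ wBase1 →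
    ¬ (wBase1 ∈ VzC g ∧ VzC g ⊆ VzC wBase1) := by decide

lemma fact_h0 : wBase1 ∈ warmuthClass := by decide

lemma Vz_inj : ∀ g ∈ warmuthClass, ∀ g' ∈ warmuthClass, Vz g = Vz g' → g = g' := by
  intro g hg g' hg' h
  exact fact_inj g hg g' hg' (by rw [← Vz_eq_VzC, ← Vz_eq_VzC]; exact h)

lemma Vz_nosub : ∀ g ∈ warmuthClass, g ≠ wBase1 →
    ¬ (wBase1 ∈ Vz g ∧ Vz g ⊆ Vz wBase1) := by
  intro g hg hne
  rw [Vz_eq_VzC, Vz_eq_VzC]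
  exact fact_nosub g hg hne

lemma mem_verSpace {H' : Finset (Fin 5 → Bool)} {S : Finset (Fin 5 × Bool)}
    {h : Fin 5 → Bool} : h ∈ verSpace H' S ↔ h ∈ H' ∧ ConsistentWith h S := by
  simp [verSpace, Finset.mem_filter, ConsistentWith]

lemma verSpace_subset (H' : Finset (Fin 5 → Bool)) (S : Finset (Fin 5 × Bool)) :
    verSpace H' S ⊆ H' := fun h hm => (mem_verSpace.1 hm).1

lemma mem_Vz_self {g : Fin 5 → Bool} (hg : g ∈ warmuthClass) : g ∈ Vz g := by
  have : g ∈ verSpace warmuthClass {zfun g} := by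
    rw [mem_verSpace]
    refine ⟨hg, ?_⟩
    intro z hz
    rw [Finset.mem_singleton] at hz
    subst hz
    exact fact_consis g hg
  exact this

/-- the preference predicate -/
def Pp (h' : Fin 5 → Bool) (H' : Finset (Fin 5 → Bool)) (h : Fin 5 → Bool) : Prop :=
  (h = wBase1 ∧ ((∃ g ∈ warmuthClass, H' = Vz g ∧ h' = g) ∨
    ((∀ g ∈ warmuthClass, H' ≠ Vz g) ∧ h' = wBase1 ∧ H' ⊆ Vz wBase1))) ∨
  (h ≠ wBase1 ∧ h' = h)

lemma Pp_of_ne {h : Fin 5 → Bool} (hw : h ≠ wBase1) (h' : Fin 5 → Bool)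
    (H' : Finset (Fin 5 → Bool)) : Pp h' H' h ↔ h' = h := by
  unfold Pp; tauto

lemma Pp_of_eq (h' : Fin 5 → Bool) (H' : Finset (Fin 5 → Bool)) :
    Pp h' H' wBase1 ↔ ((∃ g ∈ warmuthClass, H' = Vz g ∧ h' = g) ∨
      ((∀ g ∈ warmuthClass, H' ≠ Vz g) ∧ h' = wBase1 ∧ H' ⊆ Vz wBase1)) := by
  unfold Pp
  constructor
  · rintro (⟨_, hd⟩ | ⟨hne, _⟩)
    · exact hd
    · exact absurd rfl hne
  · intro hd; exact Or.inl ⟨rfl, hd⟩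

noncomputable def sigma0 : Pref (Fin 5) := fun h' H' h => if Pp h' H' h then 0 else 1

/-- master lemma: argmin of an indicator preference -/
lemma argmin_eq (H' : Finset (Fin 5 → Bool)) (h : Fin 5 → Bool) :
    argminSet sigma0 H' h =
      if (H'.filter fun h' => Pp h' H' h).Nonempty then H'.filter (fun h' => Pp h' H' h)
      else H' := by
  unfold argminSet sigma0
  split_ifs with hne
  · obtain ⟨a, ha⟩ := hne
    rw [Finset.mem_filter] at ha
    ext h'
    simp only [Finset.mem_filter]
    constructor
    · rintro ⟨h1, h2⟩
      refine ⟨h1, ?_⟩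
      by_contra hP
      have := h2 a ha.1
      rw [if_neg hP, if_pos ha.2] at this
      norm_num at this
    · rintro ⟨h1, hP⟩
      refine ⟨h1, fun h'' _ => ?_⟩
      rw [if_pos hP]
      split_ifs with h3
      · exact le_refl _
      · norm_num
  · ext h'
    simp only [Finset.mem_filter]
    constructor
    · rintro ⟨h1, _⟩; exact h1
    · intro h1
      refine ⟨h1, fun h'' hh'' => ?_⟩
      have hP' : ¬ Pp h' H' h := fun hp => hne ⟨h', Finset.mem_filter.2 ⟨h1, hp⟩⟩
      have hP'' : ¬ Pp h'' H' h := fun hp => hne ⟨h'', Finset.mem_filter.2 ⟨hh'', hp⟩⟩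
      rw [if_neg hP', if_neg hP'']

lemma argmin_ne {H' : Finset (Fin 5 → Bool)} {h : Fin 5 → Bool} (hw : h ≠ wBase1) :
    argminSet sigma0 H' h = if h ∈ H' then {h} else H' := by
  rw [argmin_eq]
  by_cases hm : h ∈ H'
  · have hfe : H'.filter (fun h' => Pp h' H' h) = {h} := by
      ext h'
      simp only [Finset.mem_filter, Pp_of_ne hw, Finset.mem_singleton]
      exact ⟨fun ⟨_, e⟩ => e, fun e => ⟨e ▸ hm, e⟩⟩
    rw [hfe, if_pos (Finset.singleton_nonempty h), if_pos hm]
  · have hfe : H'.filter (fun h' => Pp h' H' h) = ∅ := by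
      ext h'
      simp only [Finset.mem_filter, Pp_of_ne hw, Finset.notMem_empty, iff_false]
      rintro ⟨h1, rfl⟩; exact hm h1
    rw [hfe, if_neg (by simp), if_neg hm]

lemma argmin_Vz {g : Fin 5 → Bool} (hg : g ∈ warmuthClass) :
    argminSet sigma0 (Vz g) wBase1 = {g} := by
  rw [argmin_eq]
  have hfe : (Vz g).filter (fun h' => Pp h' (Vz g) wBase1) = {g} := by
    ext h'
    simp only [Finset.mem_filter, Pp_of_eq, Finset.mem_singleton]
    constructor
    · rintro ⟨hm, hP⟩
      rcases hP with ⟨g', hg', heq, he⟩ | ⟨hno, _, _⟩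
      · rw [he]; exact Vz_inj g' hg' g hg heq.symm
      · exact absurd rfl (hno g hg)
    · intro he
      exact ⟨by rw [he]; exact mem_Vz_self hg, Or.inl ⟨g, hg, rfl, he⟩⟩
  rw [hfe, if_pos (Finset.singleton_nonempty g)]

lemma argmin_noVz {H' : Finset (Fin 5 → Bool)} (hno : ∀ g ∈ warmuthClass, H' ≠ Vz g) :
    argminSet sigma0 H' wBase1 =
      if wBase1 ∈ H' ∧ H' ⊆ Vz wBase1 then {wBase1} else H' := by
  rw [argmin_eq]
  by_cases hc : wBase1 ∈ H' ∧ H' ⊆ Vz wBase1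
  · have hfe : H'.filter (fun h' => Pp h' H' wBase1) = {wBase1} := by
      ext h'
      simp only [Finset.mem_filter, Pp_of_eq, Finset.mem_singleton]
      constructor
      · rintro ⟨hm, hP⟩
        rcases hP with ⟨g', hg', heq, _⟩ | ⟨_, he, _⟩
        · exact absurd heq (hno g' hg')
        · exact he
      · rintro rfl
        exact ⟨hc.1, Or.inr ⟨hno, rfl, hc.2⟩⟩
    rw [hfe, if_pos (Finset.singleton_nonempty _), if_pos hc]
  · have hfe : H'.filter (fun h' => Pp h' H' wBase1) = ∅ := by
      ext h'
      simp only [Finset.mem_filter, Pp_of_eq, Finset.notMem_empty, iff_false]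
      rintro ⟨hm, hP⟩
      rcases hP with ⟨g', hg', heq, _⟩ | ⟨_, he, hsub⟩
      · exact absurd heq (hno g' hg')
      · exact hc ⟨he ▸ hm, hsub⟩
    rw [hfe, if_neg (by simp), if_neg hc]

lemma argmin_singleton (a h : Fin 5 → Bool) : argminSet sigma0 {a} h = {a} := by
  rw [argmin_eq]
  split_ifs with hne
  · refine Finset.Subset.antisymm (Finset.filter_subset _ _) ?_
    obtain ⟨x, hx⟩ := hne
    have hxa : x = a := Finset.mem_singleton.1 (Finset.filter_subset _ _ hx)
    subst hxa
    exact Finset.singleton_subset_iff.2 hx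
  · rfl

/-- sub-version-spaces of `Vz wBase1` containing `wBase1` -/
lemma argmin_sub {V' : Finset (Fin 5 → Bool)} (hsub : V' ⊆ Vz wBase1)
    (hmem : wBase1 ∈ V') : argminSet sigma0 V' wBase1 = {wBase1} := by
  by_cases hex : ∃ g ∈ warmuthClass, V' = Vz g
  · obtain ⟨g, hg, rfl⟩ := hex
    have hgw : g = wBase1 := by
      by_contra hne
      exact Vz_nosub g hg hne ⟨hmem, hsub⟩
    rw [hgw]
    exact argmin_Vz fact_h0
  · push_neg at hex
    rw [argmin_noVz hex, if_pos ⟨hmem, hsub⟩]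

lemma verSpace_singleton {a : Fin 5 → Bool} {S : Finset (Fin 5 × Bool)}
    (hS : ConsistentWith a S) : verSpace ({a} : Finset (Fin 5 → Bool)) S = {a} := by
  ext h
  rw [mem_verSpace]
  simp only [Finset.mem_singleton]
  exact ⟨fun ⟨e, _⟩ => e, fun e => ⟨e, e ▸ hS⟩⟩

theorem sigma0_cf : CollusionFree warmuthClass sigma0 := by
  intro h hh H' hH' hhat hargmin S hS
  by_cases hw : h = wBase1
  · subst hw
    by_cases hex : ∃ g ∈ warmuthClass, H' = Vz g
    · obtain ⟨g, hg, rfl⟩ := hex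
      rw [argmin_Vz hg] at hargmin
      have hhg : hhat = g := (Finset.singleton_inj.1 hargmin).symm
      subst hhg
      by_cases hgw : hhat = wBase1
      · subst hgw
        have hsub : verSpace (Vz wBase1) S ⊆ Vz wBase1 := verSpace_subset _ _
        have hmem : wBase1 ∈ verSpace (Vz wBase1) S :=
          mem_verSpace.2 ⟨mem_Vz_self fact_h0, hS⟩
        exact argmin_sub hsub hmem
      · have hmem : hhat ∈ verSpace (Vz hhat) S :=
          mem_verSpace.2 ⟨mem_Vz_self hg, hS⟩
        rw [argmin_ne hgw, if_pos hmem]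
    · push_neg at hex
      rw [argmin_noVz hex] at hargmin
      split_ifs at hargmin with hc
      · have hhw : hhat = wBase1 := (Finset.singleton_inj.1 hargmin).symm
        subst hhw
        have hsub : verSpace H' S ⊆ Vz wBase1 := (verSpace_subset _ _).trans hc.2
        have hmem : wBase1 ∈ verSpace H' S := mem_verSpace.2 ⟨hc.1, hS⟩
        exact argmin_sub hsub hmem
      · subst hargmin
        rw [verSpace_singleton hS]
        exact argmin_singleton _ _
  · rw [argmin_ne hw] at hargmin
    split_ifs at hargmin with hm
    · have hhh : hhat = h := (Finset.singleton_inj.1 hargmin).symm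
      subst hhh
      have hmem : hhat ∈ verSpace H' S := mem_verSpace.2 ⟨hm, hS⟩
      rw [argmin_ne hw, if_pos hmem]
    · subst hargmin
      rw [verSpace_singleton hS]
      exact argmin_singleton _ _

-- TD = 1 for sigma0
lemma Dle_one : ∀ g ∈ warmuthClass, Dle sigma0 1 warmuthClass wBase1 g := by
  intro g hg
  exact Or.inl ⟨zfun g, fact_consis g hg, by
    show argminSet sigma0 (verSpace warmuthClass {zfun g}) wBase1 = {g}
    exact argmin_Vz hg⟩

lemma Dval_ge_one (σ : Pref (Fin 5)) (H' : Finset (Fin 5 → Bool)) (h g : Fin 5 → Bool) :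
    1 ≤ Dval σ H' h g := by
  refine le_sInf ?_
  rintro n ⟨m, rfl, hm⟩
  cases m with
  | zero => exact hm.elim
  | succ m => exact_mod_cast Nat.succ_le_succ (Nat.zero_le m)

lemma Dval_one : ∀ g ∈ warmuthClass, Dval sigma0 warmuthClass wBase1 g = 1 := by
  intro g hg
  refine le_antisymm (sInf_le ⟨1, Nat.cast_one.symm, Dle_one g hg⟩) (Dval_ge_one _ _ _ _)

lemma TD_one : TDpref warmuthClass wBase1 sigma0 = 1 := by
  unfold TDpref
  apply le_antisymm
  · exact iSup₂_le fun g hg => (Dval_one g hg).le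
  · calc (1 : ℕ∞) = Dval sigma0 warmuthClass wBase1 wBase1 := (Dval_one _ fact_h0).symm
      _ ≤ _ := le_iSup₂ (f := fun g (_ : g ∈ warmuthClass) =>
            Dval sigma0 warmuthClass wBase1 g) wBase1 fact_h0

lemma sigma0_lvs : sigma0 ∈ SigmaLVS warmuthClass := sigma0_cf

lemma famTD_one : famTD warmuthClass wBase1 (SigmaLVS warmuthClass) = 1 := by
  unfold famTD
  apply le_antisymm
  · exact (iInf₂_le sigma0 sigma0_lvs).trans (le_of_eq TD_one)
  · refine le_iInf₂ fun σ' _ => ?_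
    calc (1 : ℕ∞) ≤ Dval σ' warmuthClass wBase1 wBase1 := Dval_ge_one _ _ _ _
      _ ≤ TDpref warmuthClass wBase1 σ' := by
          unfold TDpref
          exact le_iSup₂ (f := fun g (_ : g ∈ warmuthClass) =>
            Dval σ' warmuthClass wBase1 g) wBase1 fact_h0

-- NCTD = 2
noncomputable def T2 (h : Fin 5 → Bool) : Finset (Fin 5) :=
  if h = wl 0 then ∅ else if h = wl 1 then {0} else if h = wl 2 then {1}
  else if h = wl 3 then {4} else if h = wl 4 then {0, 1} else if h = wl 5 then {0, 2}
  else if h = wl 6 then {3} else if h = wl 7 then {1, 3} else if h = wl 8 then {0, 3}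
  else if h = wl 9 then {1, 4} else ∅

lemma T2_nc : NonClashing warmuthClass T2 := by unfold NonClashing; decide

lemma T2_card : ∀ h ∈ warmuthClass, (T2 h).card ≤ 2 := by decide

lemma consB_spec {T : (Fin 5 → Bool) → Finset (Fin 5)} {h g : Fin 5 → Bool}
    (hc : (T h).card ≤ 1) (hcons : consB g h ((T h).toList.head?) = true) :
    ∀ x ∈ T h, g x = h x := by
  intro x hx
  rcases Nat.le_one_iff_eq_zero_or_eq_one.1 hc with h0 | h1
  · rw [Finset.card_eq_zero] at h0
    rw [h0] at hx
    exact absurd hx (Finset.notMem_empty x)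
  · obtain ⟨a, ha⟩ := Finset.card_eq_one.1 h1
    rw [ha] at hx hcons
    rw [Finset.toList_singleton] at hcons
    have hxa : x = a := Finset.mem_singleton.1 hx
    subst hxa
    exact of_decide_eq_true (by simpa [consB] using hcons)

lemma no_one_teacher : ¬ ∃ T : (Fin 5 → Bool) → Finset (Fin 5),
    NonClashing warmuthClass T ∧ ∀ h ∈ warmuthClass, (T h).card ≤ 1 := by
  rintro ⟨T, hnc, hcard⟩
  set f : (Fin 5 → Bool) → Option (Fin 5) := fun h => (T h).toList.head? with hf
  have hpw : (wlist.map (fun h => (h, f h))).Pairwise (fun p q => clashB p q = false) := by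
    rw [List.pairwise_map]
    refine wlist_ne.imp_of_mem ?_
    intro a b ha hb hne
    have hnc' := hnc a (wlist_class a ha) b (wlist_class b hb) hne
    cases hcl : clashB (a, f a) (b, f b)
    · rfl
    · exfalso
      rw [clashB, Bool.and_eq_true] at hcl
      exact hnc' ⟨consB_spec (hcard a (wlist_class a ha)) hcl.1,
        consB_spec (hcard b (wlist_class b hb)) hcl.2⟩
  have hfalse := searchB_sound f wlist [] (by rw [List.append_nil]; exact hpw)
  rw [searchB_true] at hfalse
  simp at hfalse
  
lemma nctd_eq : NCTD warmuthClass = 2 := by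
  unfold NCTD
  have h2 : 2 ∈ {k | ∃ T : (Fin 5 → Bool) → Finset (Fin 5),
      NonClashing warmuthClass T ∧ ∀ h ∈ warmuthClass, (T h).card ≤ k} := ⟨T2, T2_nc, T2_card⟩
  apply le_antisymm
  · exact Nat.sInf_le h2
  · refine le_csInf ⟨2, h2⟩ ?_
    intro k hk
    by_contra hlt
    push_neg at hlt
    obtain ⟨T, hnc, hc⟩ := hk
    exact no_one_teacher ⟨T, hnc, fun h hh => (hc h hh).trans (by omega)⟩

/-- for the Warmuth class there are an initial hypothesis and a
collusion-free preference function with teaching dimension `1`; in particular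
`Σ_lvs-TD = 1 < 2 = NCTD`. -/
theorem warmuth_lvs_one :
    ∃ h0 ∈ warmuthClass, ∃ σ : Pref (Fin 5),
      CollusionFree warmuthClass σ ∧
      TDpref warmuthClass h0 σ = 1 ∧
      famTD warmuthClass h0 (SigmaLVS warmuthClass) = 1 ∧
      NCTD warmuthClass = 2 := by
  exact ⟨wBase1, fact_h0, sigma0, sigma0_cf, TD_one, famTD_one, nctd_eq⟩
end

section
/- For every finite instance set X, every finite hypothesis class H of functions X → Bool with |H| ≥ 2, and every initial hypothesis h0 ∈ H, there exists a collusion-free preference function σ_lvs that simultaneously satisfies the win-stay property (for every h ∈ H and every H' ⊆ H with h ∈ H', argmin_{h' ∈ H'} σ_lvs(h'; H', h) = {h}) and TD_{X,H,h0}(σ_lvs) ≤ VCD(H, X). -/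
open scoped Classical

variable {X : Type}

namespace WSVCD

/-- Version space of a pattern: hypotheses of `C` agreeing with `t` on the list `P`. -/
noncomputable def Wof (C : Finset (X → Bool)) (t : X → Bool) (P : List X) :
    Finset (X → Bool) :=
  C.filter (fun A => ∀ y ∈ P, A y = t y)

theorem mem_Wof {C : Finset (X → Bool)} {t : X → Bool} {P : List X} {A : X → Bool} :
    A ∈ Wof C t P ↔ A ∈ C ∧ ∀ y ∈ P, A y = t y := Finset.mem_filter

theorem argmin_subset (σ : Pref X) (H' : Finset (X → Bool)) (h : X → Bool) :
    argminSet σ H' h ⊆ H' := Finset.filter_subset _ _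

theorem mem_verSpace {H' : Finset (X → Bool)} {S : Finset (X × Bool)} {A : X → Bool} :
    A ∈ verSpace H' S ↔ A ∈ H' ∧ ∀ z ∈ S, A z.1 = z.2 := Finset.mem_filter

theorem argmin_winstay (σ : Pref X) (H' : Finset (X → Bool))
    (h : X → Bool) (hh : h ∈ H') (hv0 : σ h H' h = 0)
    (hv1 : ∀ A, A ≠ h → 1 ≤ σ A H' h) :
    argminSet σ H' h = {h} := by
  ext A
  simp only [argminSet, Finset.mem_filter, Finset.mem_singleton]
  constructor
  · rintro ⟨hA, hmin⟩
    by_contra hne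
    have h2 := hmin h hh
    rw [hv0] at h2
    have h1 := hv1 A hne
    linarith
  · rintro rfl
    refine ⟨hh, fun h'' _ => ?_⟩
    rw [hv0]
    by_cases hc : h'' = A
    · subst hc; rw [hv0]
    · linarith [hv1 h'' hc]

theorem argmin_pointer (σ : Pref X) (H' : Finset (X → Bool))
    (h t : X → Bool) (hh : h ∉ H') (ht : t ∈ H') (hvt : σ t H' h = 1)
    (hvo : ∀ A ∈ H', A ≠ t → σ A H' h = 2) :
    argminSet σ H' h = {t} := by
  ext A
  simp only [argminSet, Finset.mem_filter, Finset.mem_singleton]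
  constructor
  · rintro ⟨hA, hmin⟩
    by_contra hne
    have h2 := hmin t ht
    rw [hvt, hvo A hA hne] at h2
    linarith
  · rintro rfl
    refine ⟨ht, fun h'' h''mem => ?_⟩
    rw [hvt]
    by_cases hc : h'' = A
    · subst hc; rw [hvt]
    · rw [hvo h'' h''mem hc]; norm_num

/-- Stall-then-jump teaching chain. -/
theorem dle_chain (σ : Pref X) (h0 t : X → Bool) (xt : X)
    (hws : ∀ (H' : Finset (X → Bool)), h0 ∈ H' → argminSet σ H' h0 = {h0}) :
    ∀ (l : List X) (V : Finset (X → Bool)), h0 ∈ V →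
      (∀ y ∈ l, t y = h0 y) →
      argminSet σ (Wof V t (xt :: l)) h0 = {t} →
      Dle σ (l.length + 1) V h0 t := by
  intro l
  induction l with
  | nil =>
    intro V hh0 _ hfin
    refine Or.inl ⟨(xt, t xt), rfl, ?_⟩
    have hvs : verSpace V {(xt, t xt)} = Wof V t (xt :: []) := by
      ext A
      rw [mem_verSpace, mem_Wof]
      simp
    rw [Cand, hvs]
    exact hfin
  | cons y l ih =>
    intro V hh0 hstall hfin
    refine Or.inr ⟨(y, t y), rfl, ?_⟩
    have hy : t y = h0 y := hstall y (List.mem_cons_self)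
    have hh0' : h0 ∈ verSpace V {(y, t y)} := by
      rw [mem_verSpace]
      exact ⟨hh0, by intro z hz; simp only [Finset.mem_singleton] at hz; subst hz; exact hy.symm⟩
    have hcand : Cand σ V h0 (y, t y) = {h0} := by
      rw [Cand]
      exact hws _ hh0'
    rw [hcand]
    intro h'' h''mem
    simp only [Finset.mem_singleton] at h''mem
    subst h''mem
    apply ih
    · exact hh0'
    · intro y' hy'; exact hstall y' (List.mem_cons_of_mem _ hy')
    · have hseteq : Wof (verSpace V {(y, t y)}) t (xt :: l) = Wof V t (xt :: y :: l) := by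
        ext A
        rw [mem_Wof, mem_Wof, mem_verSpace]
        simp only [Finset.mem_singleton, List.mem_cons]
        constructor
        · rintro ⟨⟨hAV, hz⟩, hl⟩
          refine ⟨hAV, fun y' hy' => ?_⟩
          rcases hy' with h | h | h
          · exact hl y' (Or.inl h)
          · rw [h]; exact hz (y, t y) rfl
          · exact hl y' (Or.inr h)
        · rintro ⟨hAV, hl⟩
          refine ⟨⟨hAV, fun z hz => ?_⟩, fun y' hy' => ?_⟩
          · subst hz
            exact hl y (Or.inr (Or.inl rfl))
          · rcases hy' with h | h
            · exact hl y' (Or.inl h)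
            · exact hl y' (Or.inr (Or.inr h))
      rw [hseteq]
      exact hfin

/-- Projection lift of version spaces. -/
theorem Wof_image (U : Finset (X → Bool)) (x : X) (B : X → Bool) (P : List X)
    (hP : ∀ y ∈ P, y ≠ x) :
    Wof (U.image (fun A => Function.update A x false)) (Function.update B x false) P
      = (Wof U B P).image (fun A => Function.update A x false) := by
  ext A'
  rw [mem_Wof]
  simp only [Finset.mem_image]
  constructor
  · rintro ⟨⟨A, hA, rfl⟩, hpat⟩
    refine ⟨A, mem_Wof.mpr ⟨hA, fun y hy => ?_⟩, rfl⟩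
    have h := hpat y hy
    rwa [Function.update_of_ne (hP y hy), Function.update_of_ne (hP y hy)] at h
  · rintro ⟨A, hAW, rfl⟩
    obtain ⟨hA, hpat⟩ := mem_Wof.mp hAW
    exact ⟨⟨A, hA, rfl⟩, fun y hy => by
      rw [Function.update_of_ne (hP y hy), Function.update_of_ne (hP y hy)]
      exact hpat y hy⟩

theorem T0 : ∀ (n : ℕ) (Y : Finset X) (U : Finset (X → Bool)) (ρ : X → Bool) (e : ℕ),
    Y.card ≤ n →
    (∀ A ∈ U, ∀ z, z ∉ Y → A z = false) →
    (∀ S : Finset X, S ⊆ Y → (∀ b : X → Bool, ∃ A ∈ U, ∀ y ∈ S, A y = b y) → S.card ≤ e) →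
    ∃ P : (X → Bool) → List X,
      (∀ B ∈ U, (∀ y ∈ P B, y ∈ Y ∧ B y = ρ y) ∧ (P B).length ≤ e) ∧
      (∀ B₁ ∈ U, ∀ B₂ ∈ U, Wof U B₁ (P B₁) = Wof U B₂ (P B₂) → B₁ = B₂) := by
  intro n
  induction n with
  | zero =>
    intro Y U ρ e hcard hnorm _
    have hYe : Y = ∅ := Finset.card_eq_zero.mp (Nat.le_zero.mp hcard)
    subst hYe
    have hconst : ∀ A ∈ U, A = fun _ => false := by
      intro A hA
      funext z
      exact hnorm A hA z (Finset.notMem_empty z)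
    refine ⟨fun _ => [], ?_, ?_⟩
    · intro B _
      exact ⟨fun y hy => absurd hy (List.not_mem_nil), by simp⟩
    · intro B₁ h₁ B₂ h₂ _
      rw [hconst B₁ h₁, hconst B₂ h₂]
  | succ n ih =>
    intro Y U ρ e hcard hnorm hvc
    by_cases hYe : Y = ∅
    · subst hYe
      have hconst : ∀ A ∈ U, A = fun _ => false := by
        intro A hA
        funext z
        exact hnorm A hA z (Finset.notMem_empty z)
      refine ⟨fun _ => [], ?_, ?_⟩
      · intro B _
        exact ⟨fun y hy => absurd hy (List.not_mem_nil), by simp⟩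
      · intro B₁ h₁ B₂ h₂ _
        rw [hconst B₁ h₁, hconst B₂ h₂]
    · obtain ⟨x, hxY⟩ := Finset.nonempty_iff_ne_empty.mpr hYe
      set Y' := Y.erase x with hY'def
      have hY'card : Y'.card ≤ n := by
        rw [hY'def, Finset.card_erase_of_mem hxY]
        omega
      set π : (X → Bool) → (X → Bool) := fun A => Function.update A x false with hπdef
      set UP := U.image π with hUPdef
      set D := UP.filter
        (fun B => Function.update B x true ∈ U ∧ Function.update B x false ∈ U) with hDdef
      -- basic facts
      have hmemY' : ∀ y ∈ Y', y ≠ x := fun y hy => (Finset.mem_erase.mp hy).1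
      have hY'Y : Y' ⊆ Y := Finset.erase_subset x Y
      have hπmem : ∀ A ∈ U, π A ∈ UP := fun A hA => Finset.mem_image_of_mem π hA
      have hnormUP : ∀ B ∈ UP, ∀ z, z ∉ Y' → B z = false := by
        intro B hB z hz
        obtain ⟨A, hA, rfl⟩ := Finset.mem_image.mp hB
        by_cases hzx : z = x
        · subst hzx
          simp only [hπdef]
          exact Function.update_self _ _ _
        · simp only [hπdef]
          rw [Function.update_of_ne hzx]
          apply hnorm A hA
          intro hzY
          exact hz (Finset.mem_erase.mpr ⟨hzx, hzY⟩)
      have hvcUP : ∀ S : Finset X, S ⊆ Y' →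
          (∀ b : X → Bool, ∃ A ∈ UP, ∀ y ∈ S, A y = b y) → S.card ≤ e := by
        intro S hS hSh
        refine hvc S (hS.trans hY'Y) ?_
        intro b
        obtain ⟨B, hB, hmatch⟩ := hSh b
        obtain ⟨A, hA, rfl⟩ := Finset.mem_image.mp hB
        refine ⟨A, hA, fun y hy => ?_⟩
        have h := hmatch y hy
        simp only [hπdef] at h
        rwa [Function.update_of_ne (hmemY' y (hS hy))] at h
      have hDboth : ∀ B ∈ D, ∀ v : Bool, Function.update B x v ∈ U := by
        intro B hB v
        obtain ⟨-, h1, h2⟩ := Finset.mem_filter.mp hB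
        cases v
        · exact h2
        · exact h1
      have hupdate_mem_lift : ∀ B ∈ D, ∀ b : X → Bool,
          (∀ y ∈ Finset.erase (∅ : Finset X) x, True) → True := fun _ _ _ _ => trivial
      -- πA ∈ UP means (π A) x = false
      have hUPfalse : ∀ B ∈ UP, B x = false := by
        intro B hB
        obtain ⟨A, hA, rfl⟩ := Finset.mem_image.mp hB
        simp only [hπdef]
        exact Function.update_self _ _ _
      by_cases hD : D = ∅
      · -- no doubled fibers : π is injective on U
        have hπinjU : ∀ A₁ ∈ U, ∀ A₂ ∈ U, π A₁ = π A₂ → A₁ = A₂ := by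
          intro A₁ h₁ A₂ h₂ heq
          have hoff : ∀ z, z ≠ x → A₁ z = A₂ z := by
            intro z hzx
            have := congrFun heq z
            simp only [hπdef] at this
            rwa [Function.update_of_ne hzx, Function.update_of_ne hzx] at this
          by_cases hx : A₁ x = A₂ x
          · funext z
            by_cases hzx : z = x
            · subst hzx; exact hx
            · exact hoff z hzx
          · exfalso
            have hmemD : π A₁ ∈ D := by
              rw [hDdef]
              refine Finset.mem_filter.mpr ⟨hπmem A₁ h₁, ?_, ?_⟩
              · -- update (π A₁) x true ∈ U
                have hidem : Function.update (π A₁) x true = Function.update A₁ x true := by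
                  simp only [hπdef]; exact Function.update_idem _ _ _
                rw [hidem]
                have h12 : Function.update A₁ x true = Function.update A₂ x true := by
                  funext z
                  by_cases hzx : z = x
                  · subst hzx; rw [Function.update_self, Function.update_self]
                  · rw [Function.update_of_ne hzx, Function.update_of_ne hzx]
                    exact hoff z hzx
                cases h1x : A₁ x
                · cases h2x : A₂ x
                  · exact absurd (h1x.trans h2x.symm) hx
                  · rw [h12, ← h2x, Function.update_eq_self]; exact h₂
                · rw [← h1x, Function.update_eq_self]; exact h₁
              · have hidem : Function.update (π A₁) x false = Function.update A₁ x false := by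
                  rw [hπdef]; exact Function.update_idem _ _ _
                rw [hidem]
                have h12 : Function.update A₁ x false = Function.update A₂ x false := by
                  funext z
                  by_cases hzx : z = x
                  · subst hzx; rw [Function.update_self, Function.update_self]
                  · rw [Function.update_of_ne hzx, Function.update_of_ne hzx]
                    exact hoff z hzx
                cases h1x : A₁ x
                · rw [← h1x, Function.update_eq_self]; exact h₁
                · cases h2x : A₂ x
                  · rw [h12, ← h2x, Function.update_eq_self]; exact h₂
                  · exact absurd (h1x.trans h2x.symm) hx
            rw [hD] at hmemD
            exact Finset.notMem_empty _ hmemD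
        obtain ⟨P', hP'props, hP'inj⟩ := ih Y' UP ρ e hY'card hnormUP hvcUP
        refine ⟨fun B => P' (π B), ?_, ?_⟩
        · intro B hB
          obtain ⟨hp1, hp2⟩ := hP'props (π B) (hπmem B hB)
          refine ⟨fun y hy => ?_, hp2⟩
          obtain ⟨hyY', hyval⟩ := hp1 y hy
          refine ⟨hY'Y hyY', ?_⟩
          simp only [hπdef] at hyval
          rwa [Function.update_of_ne (hmemY' y hyY')] at hyval
        · intro B₁ h₁ B₂ h₂ heq
          apply hπinjU B₁ h₁ B₂ h₂
          apply hP'inj (π B₁) (hπmem B₁ h₁) (π B₂) (hπmem B₂ h₂)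
          have hPne1 : ∀ y ∈ P' (π B₁), y ≠ x := fun y hy => hmemY' y ((hP'props _ (hπmem B₁ h₁)).1 y hy).1
          have hPne2 : ∀ y ∈ P' (π B₂), y ≠ x := fun y hy => hmemY' y ((hP'props _ (hπmem B₂ h₂)).1 y hy).1
          rw [hUPdef, Wof_image U x B₁ _ hPne1, Wof_image U x B₂ _ hPne2, heq]
      · -- doubled fibers exist
        obtain ⟨B₀, hB₀D⟩ := Finset.nonempty_iff_ne_empty.mpr hD
        have he1 : 1 ≤ e := by
          have h1 := hvc {x} (Finset.singleton_subset_iff.mpr hxY) ?_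
          · simpa using h1
          · intro b
            refine ⟨Function.update B₀ x (b x), hDboth B₀ hB₀D (b x), ?_⟩
            intro y hy
            rw [Finset.mem_singleton] at hy
            subst hy
            exact Function.update_self _ _ _
        have hvcD : ∀ S : Finset X, S ⊆ Y' →
            (∀ b : X → Bool, ∃ A ∈ D, ∀ y ∈ S, A y = b y) → S.card ≤ e - 1 := by
          intro S hS hSh
          have hxS : x ∉ S := fun hxS => (hmemY' x (hS hxS)) rfl
          have hins : (insert x S).card ≤ e := by
            apply hvc (insert x S) (Finset.insert_subset_iff.mpr ⟨hxY, hS.trans hY'Y⟩)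
            intro b
            obtain ⟨B, hB, hmatch⟩ := hSh b
            refine ⟨Function.update B x (b x), hDboth B hB (b x), ?_⟩
            intro y hy
            rcases Finset.mem_insert.mp hy with h | h
            · subst h; exact Function.update_self _ _ _
            · rw [Function.update_of_ne (hmemY' y (hS h))]
              exact hmatch y h
          rw [Finset.card_insert_of_notMem hxS] at hins
          omega
        have hnormD : ∀ A ∈ D, ∀ z, z ∉ Y' → A z = false :=
          fun A hA => hnormUP A (Finset.mem_of_mem_filter A hA)
        obtain ⟨Pπ, hπprops, hπinj⟩ := ih Y' UP ρ e hY'card hnormUP hvcUP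
        obtain ⟨PD, hDprops, hDinj⟩ := ih Y' D ρ (e-1) hY'card hnormD hvcD
        -- reconstruction of an element from its projection and x-value
        have hrec : ∀ A : X → Bool, Function.update (π A) x (A x) = A := by
          intro A
          simp only [hπdef]
          rw [Function.update_idem _ _ _]
          exact Function.update_eq_self _ _
        have hπoff : ∀ (A : X → Bool) (y : X), y ≠ x → π A y = A y := by
          intro A y hy
          simp only [hπdef]
          exact Function.update_of_ne hy _ _
        -- nonrep elements project into D
        have hπD : ∀ A ∈ U, A x = ρ x → Function.update A x (!(ρ x)) ∈ U → π A ∈ D := by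
          intro A hAU hAx hpart
          have hAv : ∀ v : Bool, Function.update A x v ∈ U := by
            intro v
            by_cases hv : v = ρ x
            · rw [hv, ← hAx, Function.update_eq_self]; exact hAU
            · have hv' : v = !(ρ x) := Bool.eq_not_iff.mpr hv
              rw [hv']; exact hpart
          rw [hDdef]
          refine Finset.mem_filter.mpr ⟨hπmem A hAU, ?_, ?_⟩
          · have hidem : Function.update (π A) x true = Function.update A x true := by
              simp only [hπdef]; exact Function.update_idem _ _ _
            rw [hidem]; exact hAv true
          · have hidem : Function.update (π A) x false = Function.update A x false := by
              simp only [hπdef]; exact Function.update_idem _ _ _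
            rw [hidem]; exact hAv false
        have hPπne : ∀ B ∈ UP, ∀ y ∈ Pπ B, y ≠ x :=
          fun B hB y hy => hmemY' y ((hπprops B hB).1 y hy).1
        have hPDne : ∀ B ∈ D, ∀ y ∈ PD B, y ≠ x :=
          fun B hB y hy => hmemY' y ((hDprops B hB).1 y hy).1
        -- the assignment
        set Pfun : (X → Bool) → List X := fun A =>
          if A x = ρ x ∧ Function.update A x (!(ρ x)) ∈ U
          then x :: PD (π A) else Pπ (π A) with hPdef
        refine ⟨Pfun, ?_, ?_⟩
        · intro B hB
          by_cases hnr : B x = ρ x ∧ Function.update B x (!(ρ x)) ∈ U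
          · simp only [hPdef]
            rw [if_pos hnr]
            have hBD := hπD B hB hnr.1 hnr.2
            obtain ⟨hp1, hp2⟩ := hDprops (π B) hBD
            constructor
            · intro y hy
              rcases List.mem_cons.mp hy with h | h
              · subst h; exact ⟨hxY, hnr.1⟩
              · obtain ⟨hyY', hyval⟩ := hp1 y h
                refine ⟨hY'Y hyY', ?_⟩
                rw [← hπoff B y (hmemY' y hyY')]
                exact hyval
            · simp only [List.length_cons]
              omega
          · simp only [hPdef]
            rw [if_neg hnr]
            obtain ⟨hp1, hp2⟩ := hπprops (π B) (hπmem B hB)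
            refine ⟨fun y hy => ?_, hp2⟩
            obtain ⟨hyY', hyval⟩ := hp1 y hy
            refine ⟨hY'Y hyY', ?_⟩
            rw [← hπoff B y (hmemY' y hyY')]
            exact hyval
        · -- injectivity
          -- key lemma for nonrep recovery
          have key : ∀ A ∈ U, A x = ρ x → Function.update A x (!(ρ x)) ∈ U →
              ∀ B' ∈ D, ((∀ y ∈ PD (π A), B' y = π A y) ↔
                Function.update B' x (ρ x) ∈ Wof U A (x :: PD (π A))) := by
            intro A hAU hAx hpart B' hB'D
            have hAD := hπD A hAU hAx hpart
            constructor
            · intro hpat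
              refine mem_Wof.mpr ⟨hDboth B' hB'D (ρ x), ?_⟩
              intro y hy
              rcases List.mem_cons.mp hy with h | h
              · subst h
                rw [Function.update_self _ _ _, hAx]
              · have hyne := hPDne (π A) hAD y h
                rw [Function.update_of_ne hyne]
                rw [hpat y h]
                exact hπoff A y hyne
            · intro hmem
              obtain ⟨-, hpat⟩ := mem_Wof.mp hmem
              intro y hy
              have hyne := hPDne (π A) hAD y hy
              have h := hpat y (List.mem_cons_of_mem _ hy)
              rw [Function.update_of_ne hyne] at h
              rw [h]
              exact (hπoff A y hyne).symm
          -- mixed case is impossible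
          have mixed : ∀ B₁ ∈ U, ∀ B₂ ∈ U,
              ¬(B₁ x = ρ x ∧ Function.update B₁ x (!(ρ x)) ∈ U) →
              (B₂ x = ρ x ∧ Function.update B₂ x (!(ρ x)) ∈ U) →
              Wof U B₁ (Pπ (π B₁)) = Wof U B₂ (x :: PD (π B₂)) → False := by
            intro B₁ h₁ B₂ h₂ _ hnr2 heq
            have hB2self : B₂ ∈ Wof U B₂ (x :: PD (π B₂)) :=
              mem_Wof.mpr ⟨h₂, fun y _ => rfl⟩
            have hB2W1 : B₂ ∈ Wof U B₁ (Pπ (π B₁)) := by rw [heq]; exact hB2self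
            obtain ⟨-, hpat1⟩ := mem_Wof.mp hB2W1
            have hAstar : Function.update B₂ x (!(ρ x)) ∈ Wof U B₁ (Pπ (π B₁)) := by
              refine mem_Wof.mpr ⟨hnr2.2, ?_⟩
              intro y hy
              have hyne := hPπne (π B₁) (hπmem B₁ h₁) y hy
              rw [Function.update_of_ne hyne]
              exact hpat1 y hy
            rw [heq] at hAstar
            obtain ⟨-, hpat2⟩ := mem_Wof.mp hAstar
            have hxx := hpat2 x (List.mem_cons_self)
            rw [Function.update_self _ _ _, hnr2.1] at hxx
            exact (Bool.not_ne_self (ρ x)) hxx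
          intro B₁ h₁ B₂ h₂ heq
          simp only [hPdef] at heq
          by_cases hnr1 : B₁ x = ρ x ∧ Function.update B₁ x (!(ρ x)) ∈ U
            <;> by_cases hnr2 : B₂ x = ρ x ∧ Function.update B₂ x (!(ρ x)) ∈ U
          · -- both nonrep
            rw [if_pos hnr1, if_pos hnr2] at heq
            have hD1 := hπD B₁ h₁ hnr1.1 hnr1.2
            have hD2 := hπD B₂ h₂ hnr2.1 hnr2.2
            have hWD : Wof D (π B₁) (PD (π B₁)) = Wof D (π B₂) (PD (π B₂)) := by
              ext B'
              rw [mem_Wof, mem_Wof]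
              constructor
              · rintro ⟨hB'D, hpat⟩
                refine ⟨hB'D, ?_⟩
                have h1 := (key B₁ h₁ hnr1.1 hnr1.2 B' hB'D).mp hpat
                rw [heq] at h1
                exact (key B₂ h₂ hnr2.1 hnr2.2 B' hB'D).mpr h1
              · rintro ⟨hB'D, hpat⟩
                refine ⟨hB'D, ?_⟩
                have h1 := (key B₂ h₂ hnr2.1 hnr2.2 B' hB'D).mp hpat
                rw [← heq] at h1
                exact (key B₁ h₁ hnr1.1 hnr1.2 B' hB'D).mpr h1
            have hpeq := hDinj (π B₁) hD1 (π B₂) hD2 hWD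
            have e1 : B₁ = Function.update (π B₁) x (ρ x) := by
              rw [← hnr1.1, hrec]
            have e2 : B₂ = Function.update (π B₂) x (ρ x) := by
              rw [← hnr2.1, hrec]
            rw [e1, e2, hpeq]
          · -- nonrep, rep
            rw [if_pos hnr1, if_neg hnr2] at heq
            exact absurd heq.symm (fun h => mixed B₂ h₂ B₁ h₁ hnr2 hnr1 h)
          · -- rep, nonrep
            rw [if_neg hnr1, if_pos hnr2] at heq
            exact (mixed B₁ h₁ B₂ h₂ hnr1 hnr2 heq).elim
          · -- both rep
            rw [if_neg hnr1, if_neg hnr2] at heq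
            have hπeq : π B₁ = π B₂ := by
              apply hπinj (π B₁) (hπmem B₁ h₁) (π B₂) (hπmem B₂ h₂)
              rw [hUPdef, Wof_image U x B₁ _ (hPπne (π B₁) (hπmem B₁ h₁)),
                Wof_image U x B₂ _ (hPπne (π B₂) (hπmem B₂ h₂)), heq]
            have hoff : ∀ z, z ≠ x → B₁ z = B₂ z := by
              intro z hzx
              rw [← hπoff B₁ z hzx, ← hπoff B₂ z hzx, hπeq]
            by_cases hx12 : B₁ x = B₂ x
            · funext z
              by_cases hzx : z = x
              · subst hzx; exact hx12
              · exact hoff z hzx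
            · exfalso
              have h21 : Function.update B₁ x (B₂ x) = B₂ := by
                funext z
                by_cases hzx : z = x
                · subst hzx; exact Function.update_self _ _ _
                · rw [Function.update_of_ne hzx]; exact hoff z hzx
              have h12 : Function.update B₂ x (B₁ x) = B₁ := by
                funext z
                by_cases hzx : z = x
                · subst hzx; exact Function.update_self _ _ _
                · rw [Function.update_of_ne hzx]; exact (hoff z hzx).symm
              by_cases h1ρ : B₁ x = ρ x
              · apply hnr1
                refine ⟨h1ρ, ?_⟩
                have hb2 : B₂ x = !(ρ x) :=
                  Bool.eq_not_iff.mpr (fun h => hx12 (h1ρ.trans h.symm))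
                rw [← hb2, h21]
                exact h₂
              · apply hnr2
                have hb1 : B₁ x = !(ρ x) := Bool.eq_not_iff.mpr h1ρ
                have h2ρ : B₂ x = ρ x := by
                  have : B₂ x = !(B₁ x) :=
                    Bool.eq_not_iff.mpr (fun h => hx12 h.symm)
                  rw [this, hb1, Bool.not_not]
                refine ⟨h2ρ, ?_⟩
                rw [← hb1, h12]
                exact h₁

theorem T1 [Nonempty X] : ∀ (n : ℕ) (Y : Finset X) (C : Finset (X → Bool)) (ρ : X → Bool) (d : ℕ),
    Y.card ≤ n → 1 ≤ d →
    (∀ A ∈ C, ∀ z, z ∉ Y → A z = false) →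
    ρ ∈ C →
    (∀ S : Finset X, S ⊆ Y → (∀ b : X → Bool, ∃ A ∈ C, ∀ y ∈ S, A y = b y) → S.card ≤ d) →
    ∃ jp : (X → Bool) → X, ∃ Q : (X → Bool) → List X,
      (∀ t ∈ C, t ≠ ρ →
        (jp t ∈ Y ∧ (∀ y ∈ Q t, y ∈ Y) ∧ (Q t).length + 1 ≤ d ∧
         t (jp t) ≠ ρ (jp t) ∧ (∀ y ∈ Q t, t y = ρ y))) ∧
      (∀ t₁ ∈ C, ∀ t₂ ∈ C, t₁ ≠ ρ → t₂ ≠ ρ →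
        Wof C t₁ (jp t₁ :: Q t₁) = Wof C t₂ (jp t₂ :: Q t₂) → t₁ = t₂) := by
  intro n
  induction n with
  | zero =>
    intro Y C ρ d hcard _ hnorm hρC _
    have hYe : Y = ∅ := Finset.card_eq_zero.mp (Nat.le_zero.mp hcard)
    subst hYe
    have hconst : ∀ A ∈ C, A = fun _ => false := by
      intro A hA
      funext z
      exact hnorm A hA z (Finset.notMem_empty z)
    refine ⟨fun _ => Classical.arbitrary X, fun _ => [], ?_, ?_⟩
    · intro t ht htρ
      exact absurd ((hconst t ht).trans (hconst ρ hρC).symm) htρ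
    · intro t₁ h₁ t₂ h₂ _ _ _
      rw [hconst t₁ h₁, hconst t₂ h₂]
  | succ n ih =>
    intro Y C ρ d hcard hd hnorm hρC hvc
    by_cases hYe : Y = ∅
    · subst hYe
      have hconst : ∀ A ∈ C, A = fun _ => false := by
        intro A hA
        funext z
        exact hnorm A hA z (Finset.notMem_empty z)
      refine ⟨fun _ => Classical.arbitrary X, fun _ => [], ?_, ?_⟩
      · intro t ht htρ
        exact absurd ((hconst t ht).trans (hconst ρ hρC).symm) htρ
      · intro t₁ h₁ t₂ h₂ _ _ _
        rw [hconst t₁ h₁, hconst t₂ h₂]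
    · obtain ⟨x, hxY⟩ := Finset.nonempty_iff_ne_empty.mpr hYe
      set Y' := Y.erase x with hY'def
      have hY'card : Y'.card ≤ n := by
        rw [hY'def, Finset.card_erase_of_mem hxY]
        omega
      set π : (X → Bool) → (X → Bool) := fun A => Function.update A x false with hπdef
      set UP := C.image π with hUPdef
      set D := UP.filter
        (fun B => Function.update B x true ∈ C ∧ Function.update B x false ∈ C) with hDdef
      have hmemY' : ∀ y ∈ Y', y ≠ x := fun y hy => (Finset.mem_erase.mp hy).1
      have hY'Y : Y' ⊆ Y := Finset.erase_subset x Y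
      have hπmem : ∀ A ∈ C, π A ∈ UP := fun A hA => Finset.mem_image_of_mem π hA
      have hπoff : ∀ (A : X → Bool) (y : X), y ≠ x → π A y = A y := by
        intro A y hy
        simp only [hπdef]
        exact Function.update_of_ne hy _ _
      have hrec : ∀ A : X → Bool, Function.update (π A) x (A x) = A := by
        intro A
        simp only [hπdef]
        rw [Function.update_idem _ _ _]
        exact Function.update_eq_self _ _
      have hnormUP : ∀ B ∈ UP, ∀ z, z ∉ Y' → B z = false := by
        intro B hB z hz
        obtain ⟨A, hA, rfl⟩ := Finset.mem_image.mp hB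
        by_cases hzx : z = x
        · subst hzx
          simp only [hπdef]
          exact Function.update_self _ _ _
        · simp only [hπdef]
          rw [Function.update_of_ne hzx]
          apply hnorm A hA
          intro hzY
          exact hz (Finset.mem_erase.mpr ⟨hzx, hzY⟩)
      have hvcUP : ∀ S : Finset X, S ⊆ Y' →
          (∀ b : X → Bool, ∃ A ∈ UP, ∀ y ∈ S, A y = b y) → S.card ≤ d := by
        intro S hS hSh
        refine hvc S (hS.trans hY'Y) ?_
        intro b
        obtain ⟨B, hB, hmatch⟩ := hSh b
        obtain ⟨A, hA, rfl⟩ := Finset.mem_image.mp hB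
        refine ⟨A, hA, fun y hy => ?_⟩
        have h := hmatch y hy
        rwa [hπoff A y (hmemY' y (hS hy))] at h
      have hDboth : ∀ B ∈ D, ∀ v : Bool, Function.update B x v ∈ C := by
        intro B hB v
        obtain ⟨-, h1, h2⟩ := Finset.mem_filter.mp hB
        cases v
        · exact h2
        · exact h1
      -- π is injective on C when D is empty; nonrep elements project into D
      have hπD : ∀ A ∈ C, ∀ A' ∈ C, (∀ z, z ≠ x → A z = A' z) → A x ≠ A' x → π A ∈ D := by
        intro A hA A' hA' hoff hx
        have hAv : ∀ v : Bool, Function.update A x v ∈ C := by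
          intro v
          by_cases hv : v = A x
          · rw [hv, Function.update_eq_self]; exact hA
          · have hv' : v = A' x := by
              have h1 : v = !(A x) := Bool.eq_not_iff.mpr hv
              have h2 : A' x = !(A x) := Bool.eq_not_iff.mpr (fun h => hx h.symm)
              rw [h1, ← h2]
            have : Function.update A x v = A' := by
              funext z
              by_cases hzx : z = x
              · subst hzx; rw [Function.update_self _ _ _, hv']
              · rw [Function.update_of_ne hzx]; exact hoff z hzx
            rw [this]; exact hA'
        rw [hDdef]
        refine Finset.mem_filter.mpr ⟨hπmem A hA, ?_, ?_⟩
        · have hidem : Function.update (π A) x true = Function.update A x true := by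
            simp only [hπdef]; exact Function.update_idem _ _ _
          rw [hidem]; exact hAv true
        · have hidem : Function.update (π A) x false = Function.update A x false := by
            simp only [hπdef]; exact Function.update_idem _ _ _
          rw [hidem]; exact hAv false
      by_cases hD : D = ∅
      · -- π injective on C
        have hπinjU : ∀ A₁ ∈ C, ∀ A₂ ∈ C, π A₁ = π A₂ → A₁ = A₂ := by
          intro A₁ h₁ A₂ h₂ heq
          have hoff : ∀ z, z ≠ x → A₁ z = A₂ z := by
            intro z hzx
            have := congrFun heq z
            rwa [hπoff A₁ z hzx, hπoff A₂ z hzx] at this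
          by_cases hx : A₁ x = A₂ x
          · funext z
            by_cases hzx : z = x
            · subst hzx; exact hx
            · exact hoff z hzx
          · exact absurd (hπD A₁ h₁ A₂ h₂ hoff hx) (by rw [hD]; exact Finset.notMem_empty _)
        obtain ⟨jp', Q', hprops', hinj'⟩ := ih Y' UP (π ρ) d hY'card hd hnormUP
          (hπmem ρ hρC) hvcUP
        have hne : ∀ t ∈ C, t ≠ ρ → π t ≠ π ρ :=
          fun t ht htρ h => htρ (hπinjU t ht ρ hρC h)
        refine ⟨fun t => jp' (π t), fun t => Q' (π t), ?_, ?_⟩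
        · intro t ht htρ
          obtain ⟨hp1, hp2, hp3, hp4, hp5⟩ := hprops' (π t) (hπmem t ht) (hne t ht htρ)
          refine ⟨hY'Y hp1, fun y hy => hY'Y (hp2 y hy), hp3, ?_, ?_⟩
          · rwa [hπoff t _ (hmemY' _ hp1), hπoff ρ _ (hmemY' _ hp1)] at hp4
          · intro y hy
            have h := hp5 y hy
            rwa [hπoff t y (hmemY' y (hp2 y hy)), hπoff ρ y (hmemY' y (hp2 y hy))] at h
        · intro t₁ h₁ t₂ h₂ hn₁ hn₂ heq
          apply hπinjU t₁ h₁ t₂ h₂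
          apply hinj' (π t₁) (hπmem t₁ h₁) (π t₂) (hπmem t₂ h₂) (hne t₁ h₁ hn₁) (hne t₂ h₂ hn₂)
          have hq1 : ∀ y ∈ jp' (π t₁) :: Q' (π t₁), y ≠ x := by
            intro y hy
            obtain ⟨hp1, hp2, -⟩ := hprops' (π t₁) (hπmem t₁ h₁) (hne t₁ h₁ hn₁)
            rcases List.mem_cons.mp hy with h | h
            · subst h; exact hmemY' _ hp1
            · exact hmemY' y (hp2 y h)
          have hq2 : ∀ y ∈ jp' (π t₂) :: Q' (π t₂), y ≠ x := by
            intro y hy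
            obtain ⟨hp1, hp2, -⟩ := hprops' (π t₂) (hπmem t₂ h₂) (hne t₂ h₂ hn₂)
            rcases List.mem_cons.mp hy with h | h
            · subst h; exact hmemY' _ hp1
            · exact hmemY' y (hp2 y h)
          rw [hUPdef, Wof_image C x t₁ _ hq1, Wof_image C x t₂ _ hq2, heq]
      · -- doubled fibers exist
        have hvcD : ∀ S : Finset X, S ⊆ Y' →
            (∀ b : X → Bool, ∃ A ∈ D, ∀ y ∈ S, A y = b y) → S.card ≤ d - 1 := by
          intro S hS hSh
          have hxS : x ∉ S := fun hxS => (hmemY' x (hS hxS)) rfl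
          have hins : (insert x S).card ≤ d := by
            apply hvc (insert x S) (Finset.insert_subset_iff.mpr ⟨hxY, hS.trans hY'Y⟩)
            intro b
            obtain ⟨B, hB, hmatch⟩ := hSh b
            refine ⟨Function.update B x (b x), hDboth B hB (b x), ?_⟩
            intro y hy
            rcases Finset.mem_insert.mp hy with h | h
            · subst h; exact Function.update_self _ _ _
            · rw [Function.update_of_ne (hmemY' y (hS h))]
              exact hmatch y h
          rw [Finset.card_insert_of_notMem hxS] at hins
          omega
        have hnormD : ∀ A ∈ D, ∀ z, z ∉ Y' → A z = false :=
          fun A hA => hnormUP A (Finset.mem_of_mem_filter A hA)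
        obtain ⟨jp', Q', hprops', hinj'⟩ := ih Y' UP (π ρ) d hY'card hd hnormUP
          (hπmem ρ hρC) hvcUP
        obtain ⟨PD, hDprops, hDinj⟩ := T0 n Y' D ρ (d-1) hY'card hnormD hvcD
        have hPDne : ∀ B ∈ D, ∀ y ∈ PD B, y ≠ x :=
          fun B hB y hy => hmemY' y ((hDprops B hB).1 y hy).1
        -- nonrep t : t x ≠ ρ x and the ρ-aligned partner is in C
        have hπDnr : ∀ A ∈ C, A x ≠ ρ x → Function.update A x (ρ x) ∈ C → π A ∈ D := by
          intro A hA hAx hpart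
          apply hπD A hA (Function.update A x (ρ x)) hpart
          · intro z hzx
            rw [Function.update_of_ne hzx]
          · rw [Function.update_self _ _ _]
            exact hAx
        set Jf : (X → Bool) → X := fun t =>
          if t x ≠ ρ x ∧ Function.update t x (ρ x) ∈ C then x else jp' (π t) with hJdef
        set Qf : (X → Bool) → List X := fun t =>
          if t x ≠ ρ x ∧ Function.update t x (ρ x) ∈ C then PD (π t) else Q' (π t) with hQdef
        have hne : ∀ t ∈ C, t ≠ ρ → ¬(t x ≠ ρ x ∧ Function.update t x (ρ x) ∈ C) →
            π t ≠ π ρ := by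
          intro t ht htρ hnr heq
          have hoff : ∀ z, z ≠ x → t z = ρ z := by
            intro z hzx
            have := congrFun heq z
            rwa [hπoff t z hzx, hπoff ρ z hzx] at this
          have htx : t x ≠ ρ x := by
            intro h
            apply htρ
            funext z
            by_cases hzx : z = x
            · subst hzx; exact h
            · exact hoff z hzx
          apply hnr
          refine ⟨htx, ?_⟩
          have : Function.update t x (ρ x) = ρ := by
            funext z
            by_cases hzx : z = x
            · subst hzx; exact Function.update_self _ _ _
            · rw [Function.update_of_ne hzx]; exact hoff z hzx
          rw [this]; exact hρC
        refine ⟨Jf, Qf, ?_, ?_⟩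
        · intro t ht htρ
          by_cases hnr : t x ≠ ρ x ∧ Function.update t x (ρ x) ∈ C
          · simp only [hJdef, hQdef]
            rw [if_pos hnr, if_pos hnr]
            have htD := hπDnr t ht hnr.1 hnr.2
            obtain ⟨hp1, hp2⟩ := hDprops (π t) htD
            refine ⟨hxY, fun y hy => hY'Y (hp1 y hy).1, ?_, hnr.1, ?_⟩
            · omega
            · intro y hy
              have h := (hp1 y hy).2
              rwa [hπoff t y (hmemY' y (hp1 y hy).1)] at h
          · simp only [hJdef, hQdef]
            rw [if_neg hnr, if_neg hnr]
            obtain ⟨hp1, hp2, hp3, hp4, hp5⟩ := hprops' (π t) (hπmem t ht) (hne t ht htρ hnr)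
            refine ⟨hY'Y hp1, fun y hy => hY'Y (hp2 y hy), hp3, ?_, ?_⟩
            · rwa [hπoff t _ (hmemY' _ hp1), hπoff ρ _ (hmemY' _ hp1)] at hp4
            · intro y hy
              have h := hp5 y hy
              rwa [hπoff t y (hmemY' y (hp2 y hy)), hπoff ρ y (hmemY' y (hp2 y hy))] at h
        · -- injectivity
          have key : ∀ A ∈ C, A x ≠ ρ x → Function.update A x (ρ x) ∈ C →
              ∀ B' ∈ D, ((∀ y ∈ PD (π A), B' y = π A y) ↔
                Function.update B' x (!(ρ x)) ∈ Wof C A (x :: PD (π A))) := by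
            intro A hAC hAx hpart B' hB'D
            have hAD := hπDnr A hAC hAx hpart
            have hAxval : A x = !(ρ x) := Bool.eq_not_iff.mpr hAx
            constructor
            · intro hpat
              refine mem_Wof.mpr ⟨hDboth B' hB'D (!(ρ x)), ?_⟩
              intro y hy
              rcases List.mem_cons.mp hy with h | h
              · subst h
                rw [Function.update_self _ _ _, hAxval]
              · have hyne := hPDne (π A) hAD y h
                rw [Function.update_of_ne hyne]
                rw [hpat y h]
                exact hπoff A y hyne
            · intro hmem
              obtain ⟨-, hpat⟩ := mem_Wof.mp hmem
              intro y hy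
              have hyne := hPDne (π A) hAD y hy
              have h := hpat y (List.mem_cons_of_mem _ hy)
              rw [Function.update_of_ne hyne] at h
              rw [h]
              exact (hπoff A y hyne).symm
          have hPπne : ∀ t ∈ C, (htρ : t ≠ ρ) →
              (hnr : ¬(t x ≠ ρ x ∧ Function.update t x (ρ x) ∈ C)) →
              ∀ y ∈ jp' (π t) :: Q' (π t), y ≠ x := by
            intro t ht htρ hnr y hy
            obtain ⟨hp1, hp2, -⟩ := hprops' (π t) (hπmem t ht) (hne t ht htρ hnr)
            rcases List.mem_cons.mp hy with h | h
            · subst h; exact hmemY' _ hp1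
            · exact hmemY' y (hp2 y h)
          have mixed : ∀ B₁ ∈ C, ∀ B₂ ∈ C, (hn₁ : B₁ ≠ ρ) →
              ¬(B₁ x ≠ ρ x ∧ Function.update B₁ x (ρ x) ∈ C) →
              (B₂ x ≠ ρ x ∧ Function.update B₂ x (ρ x) ∈ C) →
              Wof C B₁ (jp' (π B₁) :: Q' (π B₁)) = Wof C B₂ (x :: PD (π B₂)) → False := by
            intro B₁ h₁ B₂ h₂ hn₁ hnr1 hnr2 heq
            have hB2self : B₂ ∈ Wof C B₂ (x :: PD (π B₂)) :=
              mem_Wof.mpr ⟨h₂, fun y _ => rfl⟩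
            have hB2W1 : B₂ ∈ Wof C B₁ (jp' (π B₁) :: Q' (π B₁)) := by
              rw [heq]; exact hB2self
            obtain ⟨-, hpat1⟩ := mem_Wof.mp hB2W1
            have hAstar : Function.update B₂ x (ρ x) ∈
                Wof C B₁ (jp' (π B₁) :: Q' (π B₁)) := by
              refine mem_Wof.mpr ⟨hnr2.2, ?_⟩
              intro y hy
              have hyne := hPπne B₁ h₁ hn₁ hnr1 y hy
              rw [Function.update_of_ne hyne]
              exact hpat1 y hy
            rw [heq] at hAstar
            obtain ⟨-, hpat2⟩ := mem_Wof.mp hAstar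
            have hxx := hpat2 x (List.mem_cons_self)
            rw [Function.update_self _ _ _] at hxx
            exact hnr2.1 hxx.symm
          intro B₁ h₁ B₂ h₂ hn₁ hn₂ heq
          simp only [hJdef, hQdef] at heq
          by_cases hnr1 : B₁ x ≠ ρ x ∧ Function.update B₁ x (ρ x) ∈ C
            <;> by_cases hnr2 : B₂ x ≠ ρ x ∧ Function.update B₂ x (ρ x) ∈ C
          · -- both nonrep
            rw [if_pos hnr1, if_pos hnr1, if_pos hnr2, if_pos hnr2] at heq
            have hD1 := hπDnr B₁ h₁ hnr1.1 hnr1.2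
            have hD2 := hπDnr B₂ h₂ hnr2.1 hnr2.2
            have hWD : Wof D (π B₁) (PD (π B₁)) = Wof D (π B₂) (PD (π B₂)) := by
              ext B'
              rw [mem_Wof, mem_Wof]
              constructor
              · rintro ⟨hB'D, hpat⟩
                refine ⟨hB'D, ?_⟩
                have hm := (key B₁ h₁ hnr1.1 hnr1.2 B' hB'D).mp hpat
                rw [heq] at hm
                exact (key B₂ h₂ hnr2.1 hnr2.2 B' hB'D).mpr hm
              · rintro ⟨hB'D, hpat⟩
                refine ⟨hB'D, ?_⟩
                have hm := (key B₂ h₂ hnr2.1 hnr2.2 B' hB'D).mp hpat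
                rw [← heq] at hm
                exact (key B₁ h₁ hnr1.1 hnr1.2 B' hB'D).mpr hm
            have hpeq := hDinj (π B₁) hD1 (π B₂) hD2 hWD
            have hB1x : B₁ x = !(ρ x) := Bool.eq_not_iff.mpr hnr1.1
            have hB2x : B₂ x = !(ρ x) := Bool.eq_not_iff.mpr hnr2.1
            have e1 : B₁ = Function.update (π B₁) x (!(ρ x)) := by
              rw [← hB1x, hrec]
            have e2 : B₂ = Function.update (π B₂) x (!(ρ x)) := by
              rw [← hB2x, hrec]
            rw [e1, e2, hpeq]
          · -- nonrep, rep
            rw [if_pos hnr1, if_pos hnr1, if_neg hnr2, if_neg hnr2] at heq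
            exact (mixed B₂ h₂ B₁ h₁ hn₂ hnr2 hnr1 heq.symm).elim
          · -- rep, nonrep
            rw [if_neg hnr1, if_neg hnr1, if_pos hnr2, if_pos hnr2] at heq
            exact (mixed B₁ h₁ B₂ h₂ hn₁ hnr1 hnr2 heq).elim
          · -- both rep
            rw [if_neg hnr1, if_neg hnr1, if_neg hnr2, if_neg hnr2] at heq
            have hπeq : π B₁ = π B₂ := by
              apply hinj' (π B₁) (hπmem B₁ h₁) (π B₂) (hπmem B₂ h₂)
                (hne B₁ h₁ hn₁ hnr1) (hne B₂ h₂ hn₂ hnr2)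
              rw [hUPdef, Wof_image C x B₁ _ (hPπne B₁ h₁ hn₁ hnr1),
                Wof_image C x B₂ _ (hPπne B₂ h₂ hn₂ hnr2), heq]
            have hoff : ∀ z, z ≠ x → B₁ z = B₂ z := by
              intro z hzx
              rw [← hπoff B₁ z hzx, ← hπoff B₂ z hzx, hπeq]
            by_cases hx12 : B₁ x = B₂ x
            · funext z
              by_cases hzx : z = x
              · subst hzx; exact hx12
              · exact hoff z hzx
            · exfalso
              have h21 : Function.update B₁ x (B₂ x) = B₂ := by
                funext z
                by_cases hzx : z = x
                · subst hzx; exact Function.update_self _ _ _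
                · rw [Function.update_of_ne hzx]; exact hoff z hzx
              have h12 : Function.update B₂ x (B₁ x) = B₁ := by
                funext z
                by_cases hzx : z = x
                · subst hzx; exact Function.update_self _ _ _
                · rw [Function.update_of_ne hzx]; exact (hoff z hzx).symm
              by_cases h1ρ : B₁ x = ρ x
              · apply hnr2
                have h2ρ : B₂ x ≠ ρ x := fun h => hx12 (h1ρ.trans h.symm)
                refine ⟨h2ρ, ?_⟩
                rw [← h1ρ, h12]
                exact h₁
              · apply hnr1
                refine ⟨h1ρ, ?_⟩
                have h2ρ : B₂ x = ρ x := by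
                  have h1 : B₁ x = !(ρ x) := Bool.eq_not_iff.mpr h1ρ
                  have h2 : B₂ x = !(B₁ x) := Bool.eq_not_iff.mpr (fun h => hx12 h.symm)
                  rw [h2, h1, Bool.not_not]
                rw [← h2ρ, h21]
                exact h₂


end WSVCD

/-- there is a collusion-free preference function which satisfies the
win-stay property and has teaching dimension at most `VCD(H, X)`. -/
theorem winStay_VCD (X : Type) [Fintype X] (Hc : Finset (X → Bool))
    (hcard : 2 ≤ Hc.card) (h0 : X → Bool) (h0mem : h0 ∈ Hc) :
    ∃ σ : Pref X, CollusionFree Hc σ ∧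
      (∀ h ∈ Hc, ∀ H' ⊆ Hc, h ∈ H' → argminSet σ H' h = {h}) ∧
      TDpref Hc h0 σ ≤ (VCD Hc : ℕ∞) := by
  classical
  -- two distinct hypotheses and a point where they differ
  obtain ⟨g₁, hg₁, g₂, hg₂, hgne⟩ := Finset.one_lt_card.mp (by omega : 1 < Hc.card)
  have hxex : ∃ x : X, g₁ x ≠ g₂ x := by
    by_contra hc
    push_neg at hc
    exact hgne (funext hc)
  obtain ⟨x₀, hx₀⟩ := hxex
  -- VCD ≥ 1
  set d := VCD Hc with hdDef
  have hbdd : BddAbove {k | ∃ X' : Finset X, X'.card = k ∧ Shatters Hc X'} := by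
    refine ⟨Fintype.card X, ?_⟩
    rintro k ⟨X', rfl, -⟩
    exact Finset.card_le_univ X'
  have hd1 : 1 ≤ d := by
    apply le_csSup hbdd
    refine ⟨{x₀}, Finset.card_singleton _, ?_⟩
    intro b
    by_cases hb : b x₀ = g₁ x₀
    · exact ⟨g₁, hg₁, fun y hy => by
        simp only [Finset.mem_singleton] at hy; subst hy; exact hb.symm⟩
    · refine ⟨g₂, hg₂, fun y hy => ?_⟩
      have hyx : y = x₀ := by simpa using hy
      rw [hyx]
      cases hg : g₁ x₀ <;> cases hbb : b x₀ <;> cases hgg : g₂ x₀ <;> simp_all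
  have hvc : ∀ S : Finset X, S ⊆ Finset.univ →
      (∀ b : X → Bool, ∃ A ∈ Hc, ∀ y ∈ S, A y = b y) → S.card ≤ d := by
    intro S _ hSh
    exact le_csSup hbdd ⟨S, rfl, hSh⟩
  -- the combinatorial assignment
  have hXne : Nonempty X := ⟨x₀⟩
  obtain ⟨jp, Q, hprops, hinj⟩ := WSVCD.T1 (Finset.univ.card) (Finset.univ) Hc h0 d
    (le_refl _) hd1
    (by intro A _ z hz; exact absurd (Finset.mem_univ z) hz) h0mem hvc
  -- the preference function
  have hpickex : ∃ pick : Finset (X → Bool) → (X → Bool),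
      ∀ t, t ∈ Hc → t ≠ h0 → pick (WSVCD.Wof Hc t (jp t :: Q t)) = t := by
    refine ⟨fun W =>
      if h : ∃ t, t ∈ Hc ∧ t ≠ h0 ∧ WSVCD.Wof Hc t (jp t :: Q t) = W then h.choose else h0, ?_⟩
    intro t htmem htne
    have hex : ∃ t', t' ∈ Hc ∧ t' ≠ h0 ∧
        WSVCD.Wof Hc t' (jp t' :: Q t') = WSVCD.Wof Hc t (jp t :: Q t) :=
      ⟨t, htmem, htne, rfl⟩
    simp only [dif_pos hex]
    obtain ⟨h1, h2, h3⟩ := hex.choose_spec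
    exact hinj _ h1 _ htmem h2 htne h3
  obtain ⟨pick, hpick_spec⟩ := hpickex
  set σ : Pref X := fun h' H' hh' => if h' = hh' then (0:ℝ) else if h' = pick H' then 1 else 2
    with hσDef
  have hσval0 : ∀ (H' : Finset (X → Bool)) (h : X → Bool), σ h H' h = 0 := by
    intro H' h
    simp [hσDef]
  have hσval1 : ∀ (H' : Finset (X → Bool)) (h A : X → Bool), A ≠ h → 1 ≤ σ A H' h := by
    intro H' h A hA
    simp only [hσDef]
    rw [if_neg hA]
    split_ifs <;> norm_num
  have hws : ∀ (H' : Finset (X → Bool)) (h : X → Bool), h ∈ H' → argminSet σ H' h = {h} := by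
    intro H' h hh
    exact WSVCD.argmin_winstay σ H' h hh (hσval0 H' h) (fun A hA => hσval1 H' h A hA)
  refine ⟨σ, ?_, ?_, ?_⟩
  · -- collusion-free from win-stay
    intro h hmem H' hsub hhat hargmin S hconsS
    have hhatH' : hhat ∈ H' := by
      have : hhat ∈ argminSet σ H' h := by rw [hargmin]; exact Finset.mem_singleton_self _
      exact WSVCD.argmin_subset σ H' h this
    apply hws
    rw [WSVCD.mem_verSpace]
    exact ⟨hhatH', fun z hz => hconsS z hz⟩
  · intro h _ H' _ hhH'
    exact hws H' h hhH'
  · -- teaching dimension bound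
    rw [TDpref]
    refine iSup₂_le ?_
    intro t htmem
    rw [Dval]
    by_cases htne : t = h0
    · subst htne
      have hDle : Dle σ 1 Hc t t := by
        refine Or.inl ⟨(x₀, t x₀), rfl, ?_⟩
        rw [Cand]
        apply hws
        rw [WSVCD.mem_verSpace]
        exact ⟨htmem, by intro z hz; simp only [Finset.mem_singleton] at hz; subst hz; rfl⟩
      refine le_trans (sInf_le ⟨1, rfl, hDle⟩) ?_
      exact_mod_cast hd1
    · obtain ⟨-, -, hlen, hjpne, hQagree⟩ := hprops t htmem htne
      have hh0W : h0 ∉ WSVCD.Wof Hc t (jp t :: Q t) := by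
        rw [WSVCD.mem_Wof]
        rintro ⟨-, hall⟩
        exact hjpne ((hall (jp t) (List.mem_cons_self)).symm)
      have htW : t ∈ WSVCD.Wof Hc t (jp t :: Q t) := by
        rw [WSVCD.mem_Wof]
        exact ⟨htmem, fun y _ => rfl⟩
      have hfin : argminSet σ (WSVCD.Wof Hc t (jp t :: Q t)) h0 = {t} := by
        apply WSVCD.argmin_pointer σ _ h0 t hh0W htW
        · simp only [hσDef]
          rw [if_neg htne, if_pos (hpick_spec t htmem htne).symm]
        · intro A hAW hAt
          have hAh0 : A ≠ h0 := fun e => hh0W (e ▸ hAW)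
          simp only [hσDef]
          rw [if_neg hAh0, if_neg (fun e => hAt (e.trans (hpick_spec t htmem htne)))]
      have hDle : Dle σ ((Q t).length + 1) Hc h0 t := by
        exact WSVCD.dle_chain σ h0 t (jp t) (fun H' hh => hws H' h0 hh) (Q t) Hc h0mem
          (fun y hy => (hQagree y hy)) hfin
      refine le_trans (sInf_le ⟨(Q t).length + 1, rfl, hDle⟩) ?_
      exact_mod_cast hlen
end
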